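/- A longest alternating subsequence of any permutation π of [n] has length equal to the number of extremal points of π; in particular, the subsequence formed by the extremal points is a longest alternating subsequence. -/

import Mathlib

/-- The value of the permutation `π` at the (0-indexed) position `i`, as a natural
number (junk value `0` outside the range). -/
def pval {n : ℕ} (π : Equiv.Perm (Fin n)) (i : ℕ) : ℕ :=
  if h : i < n then (π ⟨i, h⟩).val else 0

/-- Position `i` (0-indexed) is extremal in `π`: it is an endpoint, or a strict local
maximum, or a strict local minimum. -/
def IsExtremal {n : ℕ} (π : Equiv.Perm (Fin n)) (i : ℕ) : Prop :=
  i < n ∧ (i = 0 ∨ i = n - 1 ∨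
    (pval π (i - 1) < pval π i ∧ pval π (i + 1) < pval π i) ∨
    (pval π i < pval π (i - 1) ∧ pval π i < pval π (i + 1)))

instance {n : ℕ} (π : Equiv.Perm (Fin n)) : DecidablePred (IsExtremal π) := fun i => by
  unfold IsExtremal; infer_instance

/-- `e(π)`: the number of extremal points of `π`. -/
def extremalCount {n : ℕ} (π : Equiv.Perm (Fin n)) : ℕ :=
  ((Finset.range n).filter (IsExtremal π)).card
/-- `a` lists the positions of an alternating subsequence of `π` of length `k`:
positions strictly increase and consecutive values strictly alternate in direction. -/
def IsAltSubseq {n : ℕ} (π : Equiv.Perm (Fin n)) (k : ℕ) (a : Fin k → Fin n) : Prop :=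
  StrictMono a ∧ ∀ i : ℕ, ∀ h : i + 2 < k,
    (π (a ⟨i, by omega⟩) < π (a ⟨i + 1, by omega⟩) ↔
      π (a ⟨i + 2, h⟩) < π (a ⟨i + 1, by omega⟩))namespace AuxStmt19

variable {n : ℕ} (π : Equiv.Perm (Fin n))

/-- direction of step `i`. -/
def D (i : ℕ) : Prop := pval π i < pval π (i + 1)

instance : DecidablePred (D π) := fun i => by unfold D; infer_instance

lemma pval_ne {i j : ℕ} (hi : i < n) (hj : j < n) (hij : i ≠ j) :
    pval π i ≠ pval π j := by
  simp only [pval, dif_pos hi, dif_pos hj]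
  intro h
  have := π.injective (Fin.val_injective h)
  exact hij (congrArg Fin.val this)

lemma pval_fin (j : Fin n) : pval π j.val = (π j).val := by
  simp [pval, j.isLt]

lemma extremal_zero (hn : 0 < n) : IsExtremal π 0 := ⟨hn, Or.inl rfl⟩

lemma extremal_last (hn : 0 < n) : IsExtremal π (n - 1) :=
  ⟨by omega, Or.inr (Or.inl rfl)⟩

lemma extremal_interior_iff {i : ℕ} (h1 : 1 ≤ i) (h2 : i + 1 < n) :
    IsExtremal π i ↔ ¬(D π (i - 1) ↔ D π i) := by
  have e1 : i - 1 + 1 = i := by omega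
  have hab : pval π (i - 1) ≠ pval π i := pval_ne π (by omega) (by omega) (by omega)
  have hbc : pval π i ≠ pval π (i + 1) := pval_ne π (by omega) (by omega) (by omega)
  unfold IsExtremal D
  rw [e1]
  constructor
  · rintro ⟨-, h⟩; omega
  · intro h; exact ⟨by omega, by omega⟩


lemma dir_const {p q : ℕ} (hq : q < n)
    (hno : ∀ t, p < t → t < q → ¬ IsExtremal π t) :
    ∀ t, p ≤ t → t < q → (D π t ↔ D π p) := by
  intro t
  induction t with
  | zero =>
    intro h1 _
    have hp0 : p = 0 := by omega
    rw [hp0]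
  | succ t ih =>
    intro h1 h2
    rcases Nat.lt_or_ge p (t + 1) with h | h
    · have ht : D π t ↔ D π p := ih (by omega) (by omega)
      have hne : ¬ IsExtremal π (t + 1) := hno _ (by omega) h2
      rw [extremal_interior_iff π (by omega) (by omega)] at hne
      simp only [Nat.add_sub_cancel, not_not] at hne
      exact hne.symm.trans ht
    · have : p = t + 1 := by omega
      rw [this]

lemma chain_lt {p q : ℕ} (hpq : p < q) (hq : q < n)
    (hconst : ∀ t, p ≤ t → t < q → (D π t ↔ D π p)) :
    (D π p → pval π p < pval π q) ∧ (¬ D π p → pval π q < pval π p) := by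
  induction q with
  | zero => omega
  | succ q ih =>
    have hne : pval π q ≠ pval π (q + 1) := pval_ne π (by omega) hq (by omega)
    rcases Nat.lt_or_ge p q with h | h
    · have ihq := ih h (by omega) (fun t h1 h2 => hconst t h1 (by omega))
      have hstep : D π q ↔ D π p := hconst q (by omega) (by omega)
      have hD : D π q ↔ pval π q < pval π (q + 1) := Iff.rfl
      constructor <;> intro hd
      · have := ihq.1 hd
        have := hstep.mpr hd
        unfold D at this; omega
      · have := ihq.2 hd
        have : ¬ pval π q < pval π (q + 1) := fun hx => hd (hstep.mp hx)
        have := ihq.2 hd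
        omega
    · have hpq' : p = q := by omega
      subst hpq'
      constructor <;> intro hd
      · exact hd
      · unfold D at hd; omega

lemma exists_up {p q : ℕ} (hpq : p < q) (hq : q < n)
    (h : pval π p < pval π q) : ∃ t, p ≤ t ∧ t < q ∧ D π t := by
  induction q with
  | zero => omega
  | succ q ih =>
    by_cases hD : D π q
    · exact ⟨q, by omega, by omega, hD⟩
    · have hne : pval π q ≠ pval π (q + 1) := pval_ne π (by omega) hq (by omega)
      unfold D at hD
      rcases Nat.lt_or_ge p q with h' | h'
      · obtain ⟨t, ht1, ht2, ht3⟩ := ih h' (by omega) (by omega)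
        exact ⟨t, ht1, by omega, ht3⟩
      · have hpq2 : p = q := by omega
        subst hpq2; omega

lemma exists_down {p q : ℕ} (hpq : p < q) (hq : q < n)
    (h : pval π q < pval π p) : ∃ t, p ≤ t ∧ t < q ∧ ¬ D π t := by
  induction q with
  | zero => omega
  | succ q ih =>
    by_cases hD : D π q
    · unfold D at hD
      have hne : pval π q ≠ pval π (q + 1) := pval_ne π (by omega) hq (by omega)
      rcases Nat.lt_or_ge p q with h' | h'
      · obtain ⟨t, ht1, ht2, ht3⟩ := ih h' (by omega) (by omega)
        exact ⟨t, ht1, by omega, ht3⟩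
      · have hpq2 : p = q := by omega
        subst hpq2; omega
    · exact ⟨q, by omega, by omega, hD⟩

lemma exists_change {u w : ℕ} (huw : u < w) (h : ¬(D π u ↔ D π w)) :
    ∃ s, u < s ∧ s ≤ w ∧ ¬(D π (s - 1) ↔ D π s) := by
  induction w with
  | zero => omega
  | succ w ih =>
    rcases Nat.lt_or_ge u w with h' | h'
    · by_cases hD : D π u ↔ D π w
      · refine ⟨w + 1, by omega, le_refl _, ?_⟩
        simp only [Nat.add_sub_cancel]
        tauto
      · obtain ⟨s, hs1, hs2, hs3⟩ := ih h' hD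
        exact ⟨s, hs1, by omega, hs3⟩
    · have : u = w := by omega
      subst this
      exact ⟨u + 1, by omega, le_refl _, by simpa using h⟩


def extCount (π : Equiv.Perm (Fin n)) : ℕ := ((Finset.range n).filter (IsExtremal π)).card

lemma part1 (hn : 1 ≤ n) :
    ∃ a : Fin (extCount π) → Fin n,
      (StrictMono a ∧ ∀ i : ℕ, ∀ h : i + 2 < extCount π,
        (π (a ⟨i, by omega⟩) < π (a ⟨i + 1, by omega⟩) ↔
          π (a ⟨i + 2, h⟩) < π (a ⟨i + 1, by omega⟩))) ∧
      ∀ j : Fin n, (∃ i, a i = j) ↔ IsExtremal π j.val := by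
  classical
  set S := (Finset.range n).filter (IsExtremal π) with hS
  have hcard : S.card = extCount π := rfl
  let iso := S.orderIsoOfFin hcard
  have hmem : ∀ i, (iso i : ℕ) ∈ S := fun i => (iso i).2
  have hext : ∀ i, IsExtremal π (iso i : ℕ) := fun i => (Finset.mem_filter.mp (hmem i)).2
  have hlt : ∀ i, (iso i : ℕ) < n := fun i =>
    Finset.mem_range.mp (Finset.mem_filter.mp (hmem i)).1
  have hisomono : ∀ i j : Fin (extCount π), i < j → (iso i : ℕ) < (iso j : ℕ) := by
    intro i j hij
    exact_mod_cast iso.strictMono hij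
  -- no extremal strictly between consecutive image points
  have hno : ∀ (i : Fin (extCount π)) (j : Fin (extCount π)), (∀ m, ¬ (i < m ∧ m < j)) →
      ∀ t, (iso i : ℕ) < t → t < (iso j : ℕ) → ¬ IsExtremal π t := by
    intro i j hbetween t ht1 ht2 hextt
    have htn : t < n := hextt.1
    have htS : t ∈ S := Finset.mem_filter.mpr ⟨Finset.mem_range.mpr htn, hextt⟩
    obtain ⟨m, hm⟩ := iso.surjective ⟨t, htS⟩
    have hmv : (iso m : ℕ) = t := by rw [hm]
    have h1 : i < m := by
      by_contra hco
      push_neg at hco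
      rcases lt_or_eq_of_le hco with hlt' | heq
      · exact absurd (hisomono m i hlt') (by omega)
      · subst heq; omega
    have h2 : m < j := by
      by_contra hco
      push_neg at hco
      rcases lt_or_eq_of_le hco with hlt' | heq
      · exact absurd (hisomono j m hlt') (by omega)
      · subst heq; omega
    exact hbetween m ⟨h1, h2⟩
  refine ⟨fun i => ⟨iso i, hlt i⟩, ⟨?_, ?_⟩, ?_⟩
  · intro i j hij
    exact hisomono i j hij
  · intro i h
    set i0 : Fin (extCount π) := ⟨i, by omega⟩
    set i1 : Fin (extCount π) := ⟨i + 1, by omega⟩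
    set i2 : Fin (extCount π) := ⟨i + 2, h⟩
    set p := (iso i0 : ℕ) with hp
    set q := (iso i1 : ℕ) with hq
    set r := (iso i2 : ℕ) with hr
    have hpq : p < q := hisomono i0 i1 (by simp [i0, i1, Fin.lt_def])
    have hqr : q < r := hisomono i1 i2 (by simp [i1, i2, Fin.lt_def])
    have hrn : r < n := hlt i2
    have hqn : q < n := by omega
    have hq1n : q + 1 < n := by omega
    have hno1 : ∀ t, p < t → t < q → ¬ IsExtremal π t := by
      refine hno i0 i1 ?_
      intro m ⟨hm1, hm2⟩
      have := hm1
      have := hm2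
      simp [i0, i1, Fin.lt_def] at hm1 hm2
      omega
    have hno2 : ∀ t, q < t → t < r → ¬ IsExtremal π t := by
      refine hno i1 i2 ?_
      intro m ⟨hm1, hm2⟩
      simp [i1, i2, Fin.lt_def] at hm1 hm2
      omega
    have hchar : ¬(D π (q - 1) ↔ D π q) :=
      (extremal_interior_iff π (by omega) hq1n).mp (hext i1)
    have hc1 : ∀ t, p ≤ t → t < q → (D π t ↔ D π p) := dir_const π hqn hno1
    have hc2 : ∀ t, q ≤ t → t < r → (D π t ↔ D π q) := dir_const π hrn hno2
    have chain1 := chain_lt π hpq hqn hc1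
    have chain2 := chain_lt π hqr hrn hc2
    have hDq1 : D π (q - 1) ↔ D π p := hc1 (q - 1) (by omega) (by omega)
    have goalval : ∀ x y : Fin n, (π x < π y ↔ (π x).val < (π y).val) := by
      intro x y; exact Iff.rfl
    have e0 : (π (⟨p, hlt i0⟩ : Fin n)).val = pval π p := (pval_fin π _).symm
    have e1 : (π (⟨q, hlt i1⟩ : Fin n)).val = pval π q := (pval_fin π _).symm
    have e2 : (π (⟨r, hlt i2⟩ : Fin n)).val = pval π r := (pval_fin π _).symm
    show π (⟨p, hlt i0⟩ : Fin n) < π (⟨q, hlt i1⟩ : Fin n) ↔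
      π (⟨r, hlt i2⟩ : Fin n) < π (⟨q, hlt i1⟩ : Fin n)
    rw [goalval, goalval, e0, e1, e2]
    by_cases hDp : D π p
    · have hvpq : pval π p < pval π q := chain1.1 hDp
      have hDqf : ¬ D π q := fun hx => hchar ⟨fun _ => hx, fun _ => hDq1.mpr hDp⟩
      have hvrq : pval π r < pval π q := chain2.2 hDqf
      omega
    · have hvqp : pval π q < pval π p := chain1.2 hDp
      have hDqt : D π q := by
        by_contra hx
        exact hchar ⟨fun hy => absurd (hDq1.mp hy) hDp, fun hy => absurd hy hx⟩
      have hvqr : pval π q < pval π r := chain2.1 hDqt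
      omega
  · intro j
    constructor
    · rintro ⟨i, rfl⟩
      exact hext i
    · intro hj
      have hjS : j.val ∈ S := Finset.mem_filter.mpr ⟨Finset.mem_range.mpr j.isLt, hj⟩
      obtain ⟨i, hi⟩ := iso.surjective ⟨j.val, hjS⟩
      refine ⟨i, ?_⟩
      apply Fin.ext
      show (iso i : ℕ) = j.val
      rw [hi]


lemma part2 (hn : 1 ≤ n) (k : ℕ) (a : Fin k → Fin n) (hmono : StrictMono a)
    (halt : ∀ i : ℕ, ∀ h : i + 2 < k,
      (π (a ⟨i, by omega⟩) < π (a ⟨i + 1, by omega⟩) ↔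
        π (a ⟨i + 2, h⟩) < π (a ⟨i + 1, by omega⟩))) :
    k ≤ extCount π := by
  classical
  set S := (Finset.range n).filter (IsExtremal π) with hS
  have hcard : extCount π = S.card := rfl
  have h0S : 0 ∈ S := Finset.mem_filter.mpr ⟨Finset.mem_range.mpr hn, extremal_zero π hn⟩
  by_cases hk1 : k ≤ 1
  · have : 1 ≤ S.card := Finset.card_pos.mpr ⟨0, h0S⟩
    omega
  push_neg at hk1
  -- from k ≥ 2, n ≥ 2
  have hn2 : 2 ≤ n := by
    have h01 : a ⟨0, by omega⟩ < a ⟨1, by omega⟩ := hmono (by simp [Fin.lt_def])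
    have := (a ⟨1, by omega⟩).isLt
    have := Fin.lt_def.mp h01
    omega
  have hlastS : n - 1 ∈ S := Finset.mem_filter.mpr
    ⟨Finset.mem_range.mpr (by omega), extremal_last π hn⟩
  by_cases hk2 : k ≤ 2
  · have hsub : {0, n - 1} ⊆ S := by
      intro x hx
      simp only [Finset.mem_insert, Finset.mem_singleton] at hx
      rcases hx with rfl | rfl
      · exact h0S
      · exact hlastS
    have : ({0, n - 1} : Finset ℕ).card ≤ S.card := Finset.card_le_card hsub
    rw [Finset.card_insert_of_notMem (by simp; omega), Finset.card_singleton] at this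
    omega
  push_neg at hk2
  -- main case : k ≥ 3
  set A : ℕ → ℕ := fun j => if h : j < k then (a ⟨j, h⟩).val else 0 with hA
  have hAval : ∀ j (h : j < k), A j = (a ⟨j, h⟩).val := by
    intro j h; simp [hA, dif_pos h]
  have hAn : ∀ j, j < k → A j < n := by
    intro j h; rw [hAval j h]; exact (a ⟨j, h⟩).isLt
  have hAmono : ∀ j1 j2, j1 < j2 → j2 < k → A j1 < A j2 := by
    intro j1 j2 h12 h2
    rw [hAval j1 (by omega), hAval j2 h2]
    exact hmono (by simp [Fin.lt_def]; omega)
  set c : ℕ → Prop := fun j => pval π (A j) < pval π (A (j + 1)) with hc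
  have hcflip : ∀ j, j + 2 < k → (c j ↔ ¬ c (j + 1)) := by
    intro j h
    have := halt j h
    have e0 : (π (a ⟨j, by omega⟩)).val = pval π (A j) := by
      rw [hAval j (by omega)]; exact (pval_fin π _).symm
    have e1 : (π (a ⟨j + 1, by omega⟩)).val = pval π (A (j + 1)) := by
      rw [hAval (j + 1) (by omega)]; exact (pval_fin π _).symm
    have e2 : (π (a ⟨j + 2, h⟩)).val = pval π (A (j + 2)) := by
      rw [hAval (j + 2) (by omega)]; exact (pval_fin π _).symm
    have hne12 : pval π (A (j + 1)) ≠ pval π (A (j + 2)) :=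
      pval_ne π (hAn _ (by omega)) (hAn _ (by omega))
        (by have := hAmono (j + 1) (j + 2) (by omega) (by omega); omega)
    have hthis : (π (a ⟨j, by omega⟩)).val < (π (a ⟨j + 1, by omega⟩)).val ↔
        (π (a ⟨j + 2, h⟩)).val < (π (a ⟨j + 1, by omega⟩)).val := this
    rw [e0, e1, e2] at hthis
    simp only [hc, show j + 1 + 1 = j + 2 from rfl]
    omega
  have hstep : ∀ j, j + 1 < k → ∃ t, A j ≤ t ∧ t < A (j + 1) ∧ (D π t ↔ c j) := by
    intro j h
    have hA12 : A j < A (j + 1) := hAmono j (j + 1) (by omega) h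
    have hA1n : A (j + 1) < n := hAn _ h
    have hnev : pval π (A j) ≠ pval π (A (j + 1)) :=
      pval_ne π (hAn _ (by omega)) hA1n (by omega)
    by_cases hcj : c j
    · obtain ⟨t, ht1, ht2, ht3⟩ := exists_up π hA12 hA1n hcj
      exact ⟨t, ht1, ht2, iff_of_true ht3 hcj⟩
    · have : pval π (A (j + 1)) < pval π (A j) := by
        simp only [hc] at hcj ⊢; omega
      obtain ⟨t, ht1, ht2, ht3⟩ := exists_down π hA12 hA1n this
      exact ⟨t, ht1, ht2, iff_of_false ht3 hcj⟩
  set T : ℕ → ℕ := fun j => if h : j + 1 < k then (hstep j h).choose else 0 with hTdef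
  have hT : ∀ j, (h : j + 1 < k) → A j ≤ T j ∧ T j < A (j + 1) ∧ (D π (T j) ↔ c j) := by
    intro j h
    simp only [hTdef, dif_pos h]
    exact (hstep j h).choose_spec
  have hTmono : ∀ j1 j2, j1 ≤ j2 → j2 + 1 < k → T j1 ≤ T j2 := by
    intro j1 j2
    induction j2 with
    | zero =>
      intro h1 _
      have hj0 : j1 = 0 := by omega
      exact le_of_eq (congrArg T hj0)
    | succ j2 ih =>
      intro h1 h2
      rcases Nat.lt_or_ge j1 (j2 + 1) with h | h
      · have step : T j2 < T (j2 + 1) := by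
          have u1 := hT j2 (by omega)
          have u2 := hT (j2 + 1) h2
          omega
        have := ih (by omega) (by omega)
        omega
      · have : j1 = j2 + 1 := by omega
        rw [this]
  have hchange : ∀ j, j + 2 < k → ∃ s, T j < s ∧ s ≤ T (j + 1) ∧ ¬(D π (s - 1) ↔ D π s) := by
    intro j h
    have u1 := hT j (by omega)
    have u2 := hT (j + 1) (by omega)
    have hTlt : T j < T (j + 1) := by omega
    have hflip := hcflip j h
    have : ¬(D π (T j) ↔ D π (T (j + 1))) := by tauto
    exact exists_change π hTlt this
  set Sf : ℕ → ℕ := fun j => if h : j + 2 < k then (hchange j h).choose else 0 with hSfdef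
  have hSf : ∀ j, (h : j + 2 < k) →
      T j < Sf j ∧ Sf j ≤ T (j + 1) ∧ ¬(D π (Sf j - 1) ↔ D π (Sf j)) := by
    intro j h
    simp only [hSfdef, dif_pos h]
    exact (hchange j h).choose_spec
  set C : Finset ℕ := (Finset.Ico 1 (n - 1)).filter (fun i => ¬(D π (i - 1) ↔ D π i))
    with hCdef
  have hSfC : ∀ j, j + 2 < k → Sf j ∈ C := by
    intro j h
    have u := hSf j h
    have u2 := hT (j + 1) (by omega)
    rw [show j + 1 + 1 = j + 2 from rfl] at u2
    have hA2n : A (j + 2) < n := hAn _ h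
    refine Finset.mem_filter.mpr ⟨Finset.mem_Ico.mpr ⟨by omega, by omega⟩, u.2.2⟩
  have hSfmono : ∀ j1 j2, j1 < j2 → j2 + 2 < k → Sf j1 < Sf j2 := by
    intro j1 j2 h12 h2
    have u1 := hSf j1 (by omega)
    have u2 := hSf j2 h2
    have : T (j1 + 1) ≤ T j2 := hTmono (j1 + 1) j2 (by omega) (by omega)
    omega
  have hinj : ∀ j1 ∈ Finset.range (k - 2), ∀ j2 ∈ Finset.range (k - 2),
      Sf j1 = Sf j2 → j1 = j2 := by
    intro j1 h1 j2 h2 heq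
    simp only [Finset.mem_range] at h1 h2
    rcases lt_trichotomy j1 j2 with h | h | h
    · have := hSfmono j1 j2 h (by omega); omega
    · exact h
    · have := hSfmono j2 j1 h (by omega); omega
  have hcardC : k - 2 ≤ C.card := by
    have := Finset.card_le_card_of_injOn Sf
      (fun j hj => hSfC j (by simp only [Finset.mem_coe, Finset.mem_range, Finset.coe_range, Set.mem_Iio] at hj; omega)) hinj
    simpa using this
  -- S = {0, n-1} ∪ C
  have hSeq : S = insert 0 (insert (n - 1) C) := by
    ext x
    simp only [hS, hCdef, Finset.mem_insert, Finset.mem_filter, Finset.mem_range,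
      Finset.mem_Ico]
    constructor
    · rintro ⟨hxn, hx⟩
      by_cases hx0 : x = 0
      · exact Or.inl hx0
      by_cases hxl : x = n - 1
      · exact Or.inr (Or.inl hxl)
      have h1 : 1 ≤ x := by omega
      have h2 : x + 1 < n := by omega
      have := (extremal_interior_iff π h1 h2).mp hx
      exact Or.inr (Or.inr ⟨⟨h1, by omega⟩, this⟩)
    · rintro (rfl | rfl | ⟨⟨h1, h2⟩, h3⟩)
      · exact ⟨by omega, extremal_zero π hn⟩
      · exact ⟨by omega, extremal_last π hn⟩
      · exact ⟨by omega, (extremal_interior_iff π h1 (by omega)).mpr h3⟩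
  have hC0 : (0 : ℕ) ∉ C := by
    intro h
    have := (Finset.mem_filter.mp h).1
    simp at this
  have hCl : n - 1 ∉ C := by
    intro h
    have := Finset.mem_Ico.mp (Finset.mem_filter.mp h).1
    omega
  have h0ni : (0 : ℕ) ∉ insert (n - 1) C := by
    simp only [Finset.mem_insert]
    push_neg
    exact ⟨by omega, hC0⟩
  have hcardS : S.card = C.card + 2 := by
    rw [hSeq, Finset.card_insert_of_notMem h0ni, Finset.card_insert_of_notMem hCl]
  omega

end AuxStmt19

/-- The number of extremal points of `π` is exactly the length of a longest alternating
subsequence of `π`: the extremal points themselves form an alternating subsequence, and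
every alternating subsequence has length at most `e(π)`. -/


theorem stmt_19 (n : ℕ) (hn : 1 ≤ n) (π : Equiv.Perm (Fin n)) :
    (∃ a : Fin (extremalCount π) → Fin n, IsAltSubseq π (extremalCount π) a ∧
        ∀ j : Fin n, (∃ i, a i = j) ↔ IsExtremal π j.val) ∧
      ∀ k : ℕ, ∀ a : Fin k → Fin n, IsAltSubseq π k a → k ≤ extremalCount π := by
  constructor
  · obtain ⟨a, h1, h2⟩ := AuxStmt19.part1 π hn
    exact ⟨a, h1, h2⟩
  · intro k a h
    exact AuxStmt19.part2 π hn k a h.1 h.2
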